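/- For every $s$ with $\tfrac{1}{2} \leq s \leq \tfrac{2}{3}$ there exists a constant $C > 0$ such that the following holds. Let $n_1, n_2, n_3$ be nonzero integers with $n_1 + n_2 \neq 0$, $n_2 + n_3 \neq 0$, $n_3 + n_1 \neq 0$, satisfying $\max(|n_1|, |n_2|, |n_3|) \leq 4 \min(|n_1|, |n_2|, |n_3|)$, and set $n := n_1 + n_2 + n_3$ and $H_3 := (n_1 + n_2)(n_2 + n_3)(n_3 + n_1)$. Assume moreover $|n| \geq \tfrac{1}{4}|n_1|$ and $|n_1 + n_2| \geq \tfrac{1}{4}|n|$. Then $\langle n_1\rangle^{s}\, \langle n_2\rangle^{s} \;\leq\; C\, \langle n\rangle^{s}\, \langle n_3\rangle^{1-s}\, \langle H_3\rangle^{1/3}$. -/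

import Mathlib

noncomputable def jb (m : ℤ) : ℝ := Real.sqrt (1 + (m : ℝ) ^ 2)

lemma one_le_jb (m : ℤ) : 1 ≤ jb m := by
  have h0 : (0:ℝ) ≤ 1 + (m:ℝ)^2 := by positivity
  have h1 := Real.sq_sqrt h0
  have h2 := Real.sqrt_nonneg (1 + (m:ℝ)^2)
  unfold jb
  nlinarith [sq_nonneg ((m:ℝ))]

lemma jb_pos (m : ℤ) : 0 < jb m := lt_of_lt_of_le one_pos (one_le_jb m)

lemma abs_le_jb (m : ℤ) : |(m:ℝ)| ≤ jb m := by
  have h : ((m:ℝ))^2 ≤ 1 + (m:ℝ)^2 := by linarith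
  have := Real.sqrt_le_sqrt h
  simpa [jb, Real.sqrt_sq_eq_abs] using this

lemma jb_le_two_abs {m : ℤ} (hm : m ≠ 0) : jb m ≤ 2 * |(m:ℝ)| := by
  have h1 : (1:ℤ) ≤ m^2 := by nlinarith [Int.one_le_abs hm, sq_abs m]
  have h1' : (1:ℝ) ≤ (m:ℝ)^2 := by exact_mod_cast h1
  have h : (1:ℝ) + (m:ℝ)^2 ≤ (2 * |(m:ℝ)|)^2 := by
    have : (2 * |(m:ℝ)|)^2 = 4 * (m:ℝ)^2 := by rw [mul_pow, sq_abs]; ring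
    linarith [this.ge]
  calc jb m ≤ Real.sqrt ((2 * |(m:ℝ)|)^2) := Real.sqrt_le_sqrt h
    _ = 2 * |(m:ℝ)| := Real.sqrt_sq (by positivity)

theorem stmt_16 :
    ∀ s : ℝ, 1/2 ≤ s → s ≤ 2/3 →
      ∃ C : ℝ, 0 < C ∧ ∀ n₁ n₂ n₃ : ℤ, n₁ ≠ 0 → n₂ ≠ 0 → n₃ ≠ 0 →
        n₁ + n₂ ≠ 0 → n₂ + n₃ ≠ 0 → n₃ + n₁ ≠ 0 →
        max |n₁| (max |n₂| |n₃|) ≤ 4 * min |n₁| (min |n₂| |n₃|) →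
        4 * |n₁ + n₂ + n₃| ≥ |n₁| →
        4 * |n₁ + n₂| ≥ |n₁ + n₂ + n₃| →
        jb n₁ ^ s * jb n₂ ^ s
          ≤ C * jb (n₁ + n₂ + n₃) ^ s * jb n₃ ^ (1 - s)
              * jb ((n₁ + n₂) * (n₂ + n₃) * (n₃ + n₁)) ^ ((1:ℝ)/3) := by
  intro s hs1 hs2
  refine ⟨4096, by norm_num, ?_⟩
  intro n₁ n₂ n₃ h1 h2 h3 h12 h23 h31 hmax hn hn12
  set n : ℤ := n₁ + n₂ + n₃ with hn_def
  set H : ℤ := (n₁ + n₂) * (n₂ + n₃) * (n₃ + n₁) with hH_def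
  set a : ℝ := |(n₁:ℝ)| with ha_def
  have ha1 : 1 ≤ a := by
    have : (1:ℤ) ≤ |n₁| := Int.one_le_abs h1
    rw [ha_def, show |(n₁:ℝ)| = ((|n₁| : ℤ) : ℝ) by push_cast; rfl]
    exact_mod_cast this
  have ha0 : 0 < a := lt_of_lt_of_le one_pos ha1
  -- integer inequalities
  have i21 : |n₂| ≤ 4 * |n₁| := by
    have A : |n₂| ≤ max |n₁| (max |n₂| |n₃|) := le_max_of_le_right (le_max_left _ _)
    have B : min |n₁| (min |n₂| |n₃|) ≤ |n₁| := min_le_left _ _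
    have := mul_le_mul_of_nonneg_left B (by norm_num : (0:ℤ) ≤ 4)
    linarith [hmax]
  have i13 : |n₁| ≤ 4 * |n₃| := by
    have A : |n₁| ≤ max |n₁| (max |n₂| |n₃|) := le_max_left _ _
    have B : min |n₁| (min |n₂| |n₃|) ≤ |n₃| :=
      le_trans (min_le_right _ _) (min_le_right _ _)
    have := mul_le_mul_of_nonneg_left B (by norm_num : (0:ℤ) ≤ 4)
    linarith [hmax]
  have i12 : |n₁| ≤ 16 * |n₁ + n₂| := by
    have := hn; have := hn12; omega
  have iH : |n₁ + n₂| ≤ |H| := by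
    have e : |H| = |n₁ + n₂| * |n₂ + n₃| * |n₃ + n₁| := by
      rw [hH_def, abs_mul, abs_mul]
    have o1 : (1:ℤ) ≤ |n₂ + n₃| := Int.one_le_abs h23
    have o2 : (1:ℤ) ≤ |n₃ + n₁| := Int.one_le_abs h31
    have p : (0:ℤ) ≤ |n₁ + n₂| := abs_nonneg _
    calc |n₁ + n₂| = |n₁ + n₂| * 1 * 1 := by ring
      _ ≤ |n₁ + n₂| * |n₂ + n₃| * |n₃ + n₁| :=
          mul_le_mul (mul_le_mul_of_nonneg_left o1 p) o2 (by norm_num) (by positivity)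
      _ = |H| := e.symm
  -- real bounds
  have cast_abs : ∀ m : ℤ, |(m:ℝ)| = ((|m| : ℤ) : ℝ) := by
    intro m; push_cast; rfl
  have hb1 : jb n₁ ≤ 2 * a := jb_le_two_abs h1
  have hb2 : jb n₂ ≤ 8 * a := by
    have := jb_le_two_abs h2
    have h2' : |(n₂:ℝ)| ≤ 4 * a := by
      rw [cast_abs, ha_def, cast_abs]
      exact_mod_cast i21
    linarith
  have hcn : a / 4 ≤ jb n := by
    have h' : |(n₁:ℝ)| ≤ 4 * |(n:ℝ)| := by
      rw [cast_abs, cast_abs]; exact_mod_cast hn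
    linarith [abs_le_jb n]
  have hc3 : a / 4 ≤ jb n₃ := by
    have h' : |(n₁:ℝ)| ≤ 4 * |(n₃:ℝ)| := by
      rw [cast_abs, cast_abs]; exact_mod_cast i13
    linarith [abs_le_jb n₃]
  have hcH : a / 16 ≤ jb H := by
    have h' : |(n₁:ℝ)| ≤ 16 * |(H:ℝ)| := by
      rw [cast_abs, cast_abs]
      exact_mod_cast le_trans i12 (by linarith : 16 * |n₁ + n₂| ≤ 16 * |H|)
    linarith [abs_le_jb H]
  have hs0 : 0 ≤ s := by linarith
  have hs1' : 0 ≤ 1 - s := by linarith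
  -- upper bound for LHS
  have L : jb n₁ ^ s * jb n₂ ^ s ≤ 16 * a ^ ((4:ℝ)/3) := by
    have l1 : jb n₁ ^ s ≤ (2*a) ^ s :=
      Real.rpow_le_rpow (le_of_lt (jb_pos n₁)) hb1 hs0
    have l2 : jb n₂ ^ s ≤ (8*a) ^ s :=
      Real.rpow_le_rpow (le_of_lt (jb_pos n₂)) hb2 hs0
    have l3 : jb n₁ ^ s * jb n₂ ^ s ≤ (2*a)^s * (8*a)^s :=
      mul_le_mul l1 l2 (Real.rpow_nonneg (le_of_lt (jb_pos n₂)) s)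
        (Real.rpow_nonneg (by positivity) s)
    have e1 : (2*a)^s * (8*a)^s = (16:ℝ)^s * a^(2*s) := by
      rw [← Real.mul_rpow (by positivity) (by positivity),
        show (2*a)*(8*a) = 16 * a^2 by ring,
        Real.mul_rpow (by norm_num) (by positivity),
        ← Real.rpow_natCast a 2, ← Real.rpow_mul (le_of_lt ha0)]
      norm_num
    have e2 : (16:ℝ)^s ≤ 16 := by
      have := Real.rpow_le_rpow_of_exponent_le (by norm_num : (1:ℝ) ≤ 16)
        (by linarith : s ≤ 1)
      simpa using this
    have e3 : a^(2*s) ≤ a^((4:ℝ)/3) :=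
      Real.rpow_le_rpow_of_exponent_le ha1 (by linarith)
    calc jb n₁ ^ s * jb n₂ ^ s ≤ (16:ℝ)^s * a^(2*s) := by rw [← e1]; exact l3
      _ ≤ 16 * a^((4:ℝ)/3) := by
          apply mul_le_mul e2 e3 (Real.rpow_nonneg (le_of_lt ha0) _) (by norm_num)
  -- lower bound for RHS product
  have R : a ^ ((4:ℝ)/3) / 256 ≤ jb n ^ s * jb n₃ ^ (1-s) * jb H ^ ((1:ℝ)/3) := by
    have r1 : (a/4) ^ s ≤ jb n ^ s :=
      Real.rpow_le_rpow (by positivity) hcn hs0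
    have r2 : (a/4) ^ (1-s) ≤ jb n₃ ^ (1-s) :=
      Real.rpow_le_rpow (by positivity) hc3 hs1'
    have r3 : (a/16) ^ ((1:ℝ)/3) ≤ jb H ^ ((1:ℝ)/3) :=
      Real.rpow_le_rpow (by positivity) hcH (by norm_num)
    have rr : (a/4)^s * (a/4)^(1-s) * (a/16)^((1:ℝ)/3)
        ≤ jb n ^ s * jb n₃ ^ (1-s) * jb H ^ ((1:ℝ)/3) := by
      exact mul_le_mul (mul_le_mul r1 r2 (by positivity)
        (Real.rpow_nonneg (le_of_lt (jb_pos n)) _)) r3 (by positivity)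
        (mul_nonneg (Real.rpow_nonneg (jb_pos n).le _)
          (Real.rpow_nonneg (jb_pos n₃).le _))
    have e4 : (a/4)^s * (a/4)^(1-s) = a/4 := by
      rw [← Real.rpow_add (by positivity)]
      norm_num
    have e5 : a^((1:ℝ)/3) / 16 ≤ (a/16)^((1:ℝ)/3) := by
      rw [Real.div_rpow (le_of_lt ha0) (by norm_num)]
      have h16 : (16:ℝ)^((1:ℝ)/3) ≤ 16 := by
        have := Real.rpow_le_rpow_of_exponent_le (by norm_num : (1:ℝ) ≤ 16)
          (by norm_num : (1:ℝ)/3 ≤ 1)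
        simpa using this
      apply div_le_div_of_nonneg_left (Real.rpow_nonneg (le_of_lt ha0) _) _ h16
      positivity
    have e6 : a ^ ((4:ℝ)/3) / 256 ≤ (a/4) * (a^((1:ℝ)/3)/16) := by
      have : a ^ ((4:ℝ)/3) = a * a^((1:ℝ)/3) := by
        rw [show (4:ℝ)/3 = 1 + 1/3 by norm_num, Real.rpow_add ha0, Real.rpow_one]
      rw [this]
      have hpos : 0 ≤ a * a^((1:ℝ)/3) := by positivity
      nlinarith
    calc a ^ ((4:ℝ)/3) / 256 ≤ (a/4) * (a^((1:ℝ)/3)/16) := e6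
      _ ≤ (a/4) * (a/16)^((1:ℝ)/3) := by
          apply mul_le_mul_of_nonneg_left e5 (by positivity)
      _ = (a/4)^s * (a/4)^(1-s) * (a/16)^((1:ℝ)/3) := by rw [e4]
      _ ≤ _ := rr
  calc jb n₁ ^ s * jb n₂ ^ s ≤ 16 * a ^ ((4:ℝ)/3) := L
    _ = 4096 * (a ^ ((4:ℝ)/3) / 256) := by ring
    _ ≤ 4096 * (jb n ^ s * jb n₃ ^ (1-s) * jb H ^ ((1:ℝ)/3)) := by
        apply mul_le_mul_of_nonneg_left R (by norm_num)
    _ = 4096 * jb n ^ s * jb n₃ ^ (1-s) * jb H ^ ((1:ℝ)/3) := by ring
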